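/- arXiv:math/0503225 — 2 statements merged into one kernel-verified Lean document; each statement's English description precedes it below -/
import Mathlib

section
/- Let V be a finite-dimensional real vector space with a nondegenerate alternating bilinear form ω, and let V = E_s ⊕ E_c ⊕ E_u be a direct sum decomposition. Suppose T : V → V is a linear isomorphism preserving ω (ω(Tv, Tw) = ω(v,w) for all v,w) and preserving each summand, and there exist constants λ > τ ≥ 1 with ‖T v‖ ≥ λ‖v‖ for v ∈ E_u, τ^{-1}‖v‖ ≤ ‖T v‖ ≤ τ‖v‖ for v ∈ E_c, and ‖T v‖ ≤ λ^{-1}‖v‖ for v ∈ E_s (with respect to some norm on V). Then the restriction of ω to E_c is nondegenerate. -/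
open Filter Topology

private lemma aux_decay {V : Type*} [NormedAddCommGroup V]
    (g : V → V → ℝ) (C : ℝ) (hC0 : 0 ≤ C)
    (hC : ∀ v w, |g v w| ≤ C * ‖v‖ * ‖w‖)
    (f : V → V) (hf : ∀ v w, g (f v) (f w) = g v w)
    (a b : ℝ) (ha : 0 ≤ a) (hb : 0 ≤ b) (hab : a * b < 1)
    (u w : V) (hu : ∀ n, ‖f^[n] u‖ ≤ a ^ n * ‖u‖)
    (hw : ∀ n, ‖f^[n] w‖ ≤ b ^ n * ‖w‖) : g u w = 0 := by
  have hiter : ∀ n, g (f^[n] u) (f^[n] w) = g u w := by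
    intro n
    induction n with
    | zero => simp
    | succ n ih =>
      rw [Function.iterate_succ_apply', Function.iterate_succ_apply', hf, ih]
  have key : ∀ n, |g u w| ≤ (C * ‖u‖ * ‖w‖) * (a * b) ^ n := by
    intro n
    calc |g u w| = |g (f^[n] u) (f^[n] w)| := by rw [hiter]
      _ ≤ C * ‖f^[n] u‖ * ‖f^[n] w‖ := hC _ _
      _ ≤ C * (a ^ n * ‖u‖) * (b ^ n * ‖w‖) := by
          apply mul_le_mul (mul_le_mul_of_nonneg_left (hu n) hC0) (hw n)
            (norm_nonneg _) (by positivity)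
      _ = (C * ‖u‖ * ‖w‖) * (a * b) ^ n := by rw [mul_pow]; ring
  have htend : Tendsto (fun n : ℕ => (C * ‖u‖ * ‖w‖) * (a * b) ^ n) atTop (𝓝 0) := by
    have := (tendsto_pow_atTop_nhds_zero_of_lt_one (by positivity) hab).const_mul
      (C * ‖u‖ * ‖w‖)
    simpa using this
  have : |g u w| ≤ 0 := ge_of_tendsto' htend key
  have := le_antisymm this (abs_nonneg _)
  exact abs_eq_zero.mp this

theorem stmt_0 {V : Type*} [NormedAddCommGroup V] [NormedSpace ℝ V]
    [FiniteDimensional ℝ V]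
    (ω : V →ₗ[ℝ] V →ₗ[ℝ] ℝ)
    (hnd : ∀ v : V, (∀ w : V, ω v w = 0) → v = 0)
    (halt : ∀ v : V, ω v v = 0)
    (Es Ec Eu : Submodule ℝ V)
    (hsplit : DirectSum.IsInternal ![Es, Ec, Eu])
    (T : V ≃ₗ[ℝ] V)
    (hω : ∀ v w : V, ω (T v) (T w) = ω v w)
    (hTs : ∀ v ∈ Es, T v ∈ Es) (hTc : ∀ v ∈ Ec, T v ∈ Ec)
    (hTu : ∀ v ∈ Eu, T v ∈ Eu)
    (lam tau : ℝ) (htau : 1 ≤ tau) (hlt : tau < lam)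
    (hu : ∀ v ∈ Eu, lam * ‖v‖ ≤ ‖T v‖)
    (hc : ∀ v ∈ Ec, tau⁻¹ * ‖v‖ ≤ ‖T v‖ ∧ ‖T v‖ ≤ tau * ‖v‖)
    (hs : ∀ v ∈ Es, ‖T v‖ ≤ lam⁻¹ * ‖v‖) :
    ∀ u ∈ Ec, (∀ w ∈ Ec, ω u w = 0) → u = 0 := by
  have htau0 : (0:ℝ) < tau := lt_of_lt_of_le zero_lt_one htau
  have hlam0 : (0:ℝ) < lam := lt_trans htau0 hlt
  -- boundedness of ω
  obtain ⟨C, hC0, hC⟩ : ∃ C : ℝ, 0 ≤ C ∧ ∀ v w : V, |ω v w| ≤ C * ‖v‖ * ‖w‖ := by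
    let Φ : V →ₗ[ℝ] V →L[ℝ] ℝ :=
      { toFun := fun v => LinearMap.toContinuousLinearMap (ω v)
        map_add' := fun x y => by ext w; simp
        map_smul' := fun c x => by ext w; simp }
    let Φ' := LinearMap.toContinuousLinearMap Φ
    refine ⟨‖Φ'‖, norm_nonneg Φ', fun v w => ?_⟩
    calc |ω v w| = ‖Φ' v w‖ := by simp [Φ', Φ, Real.norm_eq_abs]
      _ ≤ ‖Φ' v‖ * ‖w‖ := (Φ' v).le_opNorm w
      _ ≤ ‖Φ'‖ * ‖v‖ * ‖w‖ :=
          mul_le_mul_of_nonneg_right (Φ'.le_opNorm v) (norm_nonneg w)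
  -- iterate bounds
  have iter_bound : ∀ (f : V → V) (E : Submodule ℝ V) (r : ℝ), 0 ≤ r →
      (∀ v ∈ E, f v ∈ E ∧ ‖f v‖ ≤ r * ‖v‖) →
      ∀ v ∈ E, ∀ n : ℕ, f^[n] v ∈ E ∧ ‖f^[n] v‖ ≤ r ^ n * ‖v‖ := by
    intro f E r hr hE v hv n
    induction n with
    | zero => simpa using hv
    | succ n ih =>
      obtain ⟨hm, hb⟩ := ih
      rw [Function.iterate_succ_apply']
      refine ⟨(hE _ hm).1, ?_⟩
      calc ‖f (f^[n] v)‖ ≤ r * ‖f^[n] v‖ := (hE _ hm).2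
        _ ≤ r * (r ^ n * ‖v‖) := by nlinarith
        _ = r ^ (n + 1) * ‖v‖ := by ring
  -- T.symm preserves Ec and Eu
  have hmap : ∀ (E : Submodule ℝ V), (∀ v ∈ E, T v ∈ E) → ∀ v ∈ E, T.symm v ∈ E := by
    intro E hTE v hv
    have hle : E.map (T : V →ₗ[ℝ] V) ≤ E := by
      rintro x ⟨y, hy, rfl⟩; exact hTE y hy
    have heq : E.map (T : V →ₗ[ℝ] V) = E := by
      apply Submodule.eq_of_le_of_finrank_le hle
      rw [LinearEquiv.finrank_map_eq]
    rw [← heq] at hv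
    obtain ⟨x, hx, hxv⟩ := hv
    have : T.symm v = x := by rw [← hxv]; exact T.symm_apply_apply x
    rwa [this]
  intro u huc h0
  apply hnd
  have hratio : tau * lam⁻¹ < 1 := by
    rw [← div_eq_mul_inv, div_lt_one hlam0]; exact hlt
  -- u iterates under T
  have hucIter := iter_bound (⇑T) Ec tau htau0.le
    (fun v hv => ⟨hTc v hv, (hc v hv).2⟩) u huc
  -- ω u s = 0 for s in Es
  have hωs : ∀ s ∈ Es, ω u s = 0 := by
    intro s hsmem
    have hsIter := iter_bound (⇑T) Es lam⁻¹ (inv_pos.mpr hlam0).le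
      (fun v hv => ⟨hTs v hv, hs v hv⟩) s hsmem
    exact aux_decay (fun v w => ω v w) C hC0 hC (⇑T) hω tau lam⁻¹ htau0.le
      (inv_pos.mpr hlam0).le hratio u s (fun n => (hucIter n).2)
      (fun n => (hsIter n).2)
  -- ω u e = 0 for e in Eu
  have hωu : ∀ e ∈ Eu, ω u e = 0 := by
    intro e hemem
    have hf : ∀ v w : V, ω (T.symm v) (T.symm w) = ω v w := by
      intro v w
      rw [← hω (T.symm v) (T.symm w), T.apply_symm_apply, T.apply_symm_apply]
    have hcinv : ∀ v ∈ Ec, T.symm v ∈ Ec ∧ ‖T.symm v‖ ≤ tau * ‖v‖ := by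
      intro v hv
      have hx : T.symm v ∈ Ec := hmap Ec hTc v hv
      refine ⟨hx, ?_⟩
      have h1 := (hc _ hx).1
      rw [T.apply_symm_apply] at h1
      calc ‖T.symm v‖ = tau * (tau⁻¹ * ‖T.symm v‖) := by field_simp
        _ ≤ tau * ‖v‖ := mul_le_mul_of_nonneg_left h1 htau0.le
    have huinv : ∀ v ∈ Eu, T.symm v ∈ Eu ∧ ‖T.symm v‖ ≤ lam⁻¹ * ‖v‖ := by
      intro v hv
      have hx : T.symm v ∈ Eu := hmap Eu hTu v hv
      refine ⟨hx, ?_⟩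
      have h1 := hu _ hx
      rw [T.apply_symm_apply] at h1
      rw [inv_mul_eq_div, le_div_iff₀ hlam0]
      linarith
    have hucIter' := iter_bound (⇑T.symm) Ec tau htau0.le hcinv u huc
    have heIter := iter_bound (⇑T.symm) Eu lam⁻¹ (inv_pos.mpr hlam0).le huinv e hemem
    exact aux_decay (fun v w => ω v w) C hC0 hC (⇑T.symm) hf tau lam⁻¹ htau0.le
      (inv_pos.mpr hlam0).le hratio u e (fun n => (hucIter' n).2)
      (fun n => (heIter n).2)
  -- spanning
  intro w
  have htop : (⨆ i, ![Es, Ec, Eu] i) = ⊤ := hsplit.submodule_iSup_eq_top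
  have hwmem : w ∈ ⨆ i, ![Es, Ec, Eu] i := htop ▸ Submodule.mem_top
  refine Submodule.iSup_induction _ (motive := fun w => ω u w = 0) hwmem ?_ (by simp) ?_
  · intro i x hx
    fin_cases i
    · exact hωs x hx
    · exact h0 x hx
    · exact hωu x hx
  · intro x y hx hy
    rw [map_add, hx, hy, add_zero]
end

section
/- Let A : V → V be a linear isomorphism of a finite-dimensional normed real vector space admitting an invariant splitting V = E_s ⊕ E_c ⊕ E_u with constants λ₁ > λ₂ > 1 > μ₂ > μ₁ > 0 as in the definition of partial hyperbolicity (‖Av‖ ≥ λ₁‖v‖ on E_u, μ₂‖v‖ ≤ ‖Av‖ ≤ λ₂‖v‖ on E_c, ‖Av‖ ≤ μ₁‖v‖ on E_s). Then the splitting is unique: if V = F_s ⊕ F_c ⊕ F_u is another A-invariant splitting satisfying the same inequalities with the same constants, then F_s = E_s, F_c = E_c, and F_u = E_u. -/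
open Submodule

section Aux

variable {V : Type*} [NormedAddCommGroup V] [NormedSpace ℝ V] [FiniteDimensional ℝ V]

private lemma fin3_biSup (f : Fin 3 → Submodule ℝ V) (i a b : Fin 3)
    (hai : a ≠ i) (hbi : b ≠ i) (hcover : ∀ j : Fin 3, j = i ∨ j = a ∨ j = b) :
    (⨆ j ≠ i, f j) = f a ⊔ f b := by
  apply le_antisymm
  · refine iSup₂_le fun j hj => ?_
    rcases hcover j with h | h | h
    · exact absurd h hj
    · subst h; exact le_sup_left
    · subst h; exact le_sup_right
  · exact sup_le (le_iSup₂_of_le a hai le_rfl) (le_iSup₂_of_le b hbi le_rfl)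

private lemma fin3_iSup (f : Fin 3 → Submodule ℝ V) :
    (⨆ j, f j) = f 0 ⊔ (f 1 ⊔ f 2) := by
  apply le_antisymm
  · refine iSup_le fun j => ?_
    fin_cases j
    · exact le_sup_left
    · exact le_sup_of_le_right le_sup_left
    · exact le_sup_of_le_right le_sup_right
  · exact sup_le (le_iSup f 0) (sup_le (le_iSup f 1) (le_iSup f 2))

private lemma symm_mem (A : V ≃ₗ[ℝ] V) (S : Submodule ℝ V) (h : ∀ v ∈ S, A v ∈ S) :
    ∀ v ∈ S, A.symm v ∈ S := by
  have hmap : S.map (A : V →ₗ[ℝ] V) = S := by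
    apply Submodule.eq_of_le_of_finrank_le
    · rintro _ ⟨v, hv, rfl⟩; exact h v hv
    · exact le_of_eq (A.finrank_map_eq S).symm
  intro v hv
  rw [← hmap] at hv
  obtain ⟨w, hw, hwv⟩ := hv
  have hsv : A.symm v = w := by
    have : (A : V →ₗ[ℝ] V) w = A w := rfl
    rw [← hwv, this, A.symm_apply_apply]
  rwa [hsv]

private lemma iter_mem (A : V ≃ₗ[ℝ] V) (S : Submodule ℝ V) (hinv : ∀ v ∈ S, A v ∈ S) :
    ∀ v ∈ S, ∀ n : ℕ, (A ^ n) v ∈ S := by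
  intro v hv n
  induction n with
  | zero => simpa using hv
  | succ n ih =>
    have hstep : (A ^ (n + 1)) v = A ((A ^ n) v) := by rw [pow_succ']; rfl
    rw [hstep]; exact hinv _ ih

private lemma iter_upper (A : V ≃ₗ[ℝ] V) (S : Submodule ℝ V) (r : ℝ) (hr : 0 ≤ r)
    (hinv : ∀ v ∈ S, A v ∈ S) (hb : ∀ v ∈ S, ‖A v‖ ≤ r * ‖v‖)
    (v : V) (hv : v ∈ S) : ∀ n : ℕ, ‖(A ^ n) v‖ ≤ ‖v‖ * r ^ n := by
  intro n
  induction n with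
  | zero => simp
  | succ n ih =>
    have hstep : (A ^ (n + 1)) v = A ((A ^ n) v) := by rw [pow_succ']; rfl
    rw [hstep]
    calc ‖A ((A ^ n) v)‖ ≤ r * ‖(A ^ n) v‖ := hb _ (iter_mem A S hinv v hv n)
      _ ≤ r * (‖v‖ * r ^ n) := mul_le_mul_of_nonneg_left ih hr
      _ = ‖v‖ * r ^ (n + 1) := by ring

private lemma iter_lower (A : V ≃ₗ[ℝ] V) (S : Submodule ℝ V) (r : ℝ) (hr : 0 ≤ r)
    (hinv : ∀ v ∈ S, A v ∈ S) (hb : ∀ v ∈ S, r * ‖v‖ ≤ ‖A v‖)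
    (v : V) (hv : v ∈ S) : ∀ n : ℕ, ‖v‖ * r ^ n ≤ ‖(A ^ n) v‖ := by
  intro n
  induction n with
  | zero => simp
  | succ n ih =>
    have hstep : (A ^ (n + 1)) v = A ((A ^ n) v) := by rw [pow_succ']; rfl
    rw [hstep]
    calc ‖v‖ * r ^ (n + 1) = r * (‖v‖ * r ^ n) := by ring
      _ ≤ r * ‖(A ^ n) v‖ := mul_le_mul_of_nonneg_left ih hr
      _ ≤ ‖A ((A ^ n) v)‖ := hb _ (iter_mem A S hinv v hv n)

private lemma symm_upper (A : V ≃ₗ[ℝ] V) (S : Submodule ℝ V) (r : ℝ) (hr : 0 < r)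
    (hinv : ∀ v ∈ S, A v ∈ S) (hb : ∀ v ∈ S, r * ‖v‖ ≤ ‖A v‖) :
    ∀ v ∈ S, ‖A.symm v‖ ≤ r⁻¹ * ‖v‖ := by
  intro v hv
  have hw : A.symm v ∈ S := symm_mem A S hinv v hv
  have h := hb _ hw
  rw [A.apply_symm_apply] at h
  refine le_of_mul_le_mul_left ?_ hr
  rw [show r * (r⁻¹ * ‖v‖) = ‖v‖ by field_simp]
  exact h

private lemma symm_lower (A : V ≃ₗ[ℝ] V) (S : Submodule ℝ V) (r : ℝ) (hr : 0 < r)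
    (hinv : ∀ v ∈ S, A v ∈ S) (hb : ∀ v ∈ S, ‖A v‖ ≤ r * ‖v‖) :
    ∀ v ∈ S, r⁻¹ * ‖v‖ ≤ ‖A.symm v‖ := by
  intro v hv
  have hw : A.symm v ∈ S := symm_mem A S hinv v hv
  have h := hb _ hw
  rw [A.apply_symm_apply] at h
  refine le_of_mul_le_mul_left ?_ hr
  rw [show r * (r⁻¹ * ‖v‖) = ‖v‖ by field_simp]
  exact h

private lemma sup_invariant (A : V ≃ₗ[ℝ] V) (P Q : Submodule ℝ V)
    (hP : ∀ v ∈ P, A v ∈ P) (hQ : ∀ v ∈ Q, A v ∈ Q) :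
    ∀ v ∈ P ⊔ Q, A v ∈ P ⊔ Q := by
  intro v hv
  obtain ⟨a, ha, b, hb, rfl⟩ := mem_sup.mp hv
  rw [map_add]
  exact add_mem (mem_sup_left (hP a ha)) (mem_sup_right (hQ b hb))

private lemma mid_inter (X Y Z : Submodule ℝ V) (hd : Disjoint X (Y ⊔ Z)) :
    (X ⊔ Y) ⊓ (Y ⊔ Z) ≤ Y := by
  intro v hv
  obtain ⟨h1, h2⟩ := mem_inf.mp hv
  obtain ⟨x, hx, y, hy, rfl⟩ := mem_sup.mp h1
  have hxmem : x ∈ Y ⊔ Z := by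
    have hx' : x = (x + y) - y := by abel
    rw [hx']
    exact sub_mem h2 (mem_sup_left hy)
  have hx0 : x = 0 := (Submodule.disjoint_def.mp hd) x hx hxmem
  rw [hx0, zero_add]
  exact hy

private lemma comp_zero (A : V ≃ₗ[ℝ] V) (p q : Submodule ℝ V) (hpq : IsCompl p q)
    (hp : ∀ v ∈ p, A v ∈ p) (hq : ∀ v ∈ q, A v ∈ q)
    (R r : ℝ) (hr : 0 < r) (hrR : r < R)
    (hlow : ∀ v ∈ p, R * ‖v‖ ≤ ‖A v‖)
    (v : V) (C : ℝ) (hv : ∀ n : ℕ, ‖(A ^ n) v‖ ≤ C * r ^ n) :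
    v ∈ q := by
  have hvtop : v ∈ p ⊔ q := by rw [hpq.sup_eq_top]; trivial
  obtain ⟨a, ha, b, hb, hab⟩ := Submodule.mem_sup.mp hvtop
  have hR0 : 0 < R := hr.trans hrR
  set π : V →ₗ[ℝ] V := p.subtype ∘ₗ p.linearProjOfIsCompl q hpq with hπ
  obtain ⟨K, hK0, hKb⟩ : ∃ K, 0 < K ∧ ∀ w, ‖π w‖ ≤ K * ‖w‖ := by
    refine ⟨‖LinearMap.toContinuousLinearMap π‖ + 1, by positivity, fun w => ?_⟩
    have h := (LinearMap.toContinuousLinearMap π).le_opNorm w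
    rw [LinearMap.coe_toContinuousLinearMap'] at h
    nlinarith [norm_nonneg w]
  have key : ∀ n : ℕ, ‖a‖ * R ^ n ≤ K * (C * r ^ n) := by
    intro n
    have hpa : (A ^ n) a ∈ p := iter_mem A p hp a ha n
    have hqb : (A ^ n) b ∈ q := iter_mem A q hq b hb n
    have hdec : (A ^ n) v = (A ^ n) a + (A ^ n) b := by rw [← hab, map_add]
    have e1 : π ((A ^ n) a) = (A ^ n) a :=
      congrArg Subtype.val (linearProjOfIsCompl_apply_left hpq ⟨(A ^ n) a, hpa⟩)
    have e2 : π ((A ^ n) b) = 0 := by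
      have h0 := linearProjOfIsCompl_apply_right hpq ⟨(A ^ n) b, hqb⟩
      have : π ((A ^ n) b) = ((p.projectionOnto q hpq) ((A ^ n) b) : V) := rfl
      rw [this]; exact congrArg Subtype.val h0
    have hπv : π ((A ^ n) v) = (A ^ n) a := by
      rw [hdec, map_add, e1, e2, add_zero]
    calc ‖a‖ * R ^ n ≤ ‖(A ^ n) a‖ := iter_lower A p R hR0.le hp hlow a ha n
      _ = ‖π ((A ^ n) v)‖ := by rw [hπv]
      _ ≤ K * ‖(A ^ n) v‖ := hKb _
      _ ≤ K * (C * r ^ n) := mul_le_mul_of_nonneg_left (hv n) hK0.le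
  have ha0 : a = 0 := by
    by_contra hne
    have hna : 0 < ‖a‖ := norm_pos_iff.mpr hne
    obtain ⟨n, hn⟩ := pow_unbounded_of_one_lt (K * C / ‖a‖) ((one_lt_div hr).mpr hrR)
    have hrn : 0 < r ^ n := pow_pos hr n
    have h1 : K * C < (R / r) ^ n * ‖a‖ := (div_lt_iff₀ hna).mp hn
    have h2 : K * C * r ^ n < ((R / r) ^ n * ‖a‖) * r ^ n :=
      mul_lt_mul_of_pos_right h1 hrn
    have h3 : ((R / r) ^ n * ‖a‖) * r ^ n = ‖a‖ * R ^ n := by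
      rw [div_pow]; field_simp
    rw [h3] at h2
    have key' := key n
    rw [← mul_assoc] at key'
    linarith
  rw [ha0, zero_add] at hab
  rwa [← hab]

end Aux

section Char

variable {V : Type*} [NormedAddCommGroup V] [NormedSpace ℝ V] [FiniteDimensional ℝ V]

/-- Characterization of the pieces of a partially hyperbolic splitting by growth rates. -/
private lemma splitting_char (A : V ≃ₗ[ℝ] V)
    (lam₁ lam₂ mu₂ mu₁ : ℝ)
    (h1 : lam₂ < lam₁) (h2 : 1 < lam₂) (h3 : mu₂ < 1) (h4 : mu₁ < mu₂) (h5 : 0 < mu₁)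
    (Gs Gc Gu : Submodule ℝ V)
    (hsplit : DirectSum.IsInternal ![Gs, Gc, Gu])
    (hAs : ∀ v ∈ Gs, A v ∈ Gs) (hAc : ∀ v ∈ Gc, A v ∈ Gc)
    (hAu : ∀ v ∈ Gu, A v ∈ Gu)
    (hu : ∀ v ∈ Gu, lam₁ * ‖v‖ ≤ ‖A v‖)
    (hc : ∀ v ∈ Gc, mu₂ * ‖v‖ ≤ ‖A v‖ ∧ ‖A v‖ ≤ lam₂ * ‖v‖)
    (hs : ∀ v ∈ Gs, ‖A v‖ ≤ mu₁ * ‖v‖) :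
    (∀ v C, (∀ n : ℕ, ‖(A ^ n) v‖ ≤ C * mu₁ ^ n) → v ∈ Gs) ∧
    (∀ v C, (∀ n : ℕ, ‖(A ^ n) v‖ ≤ C * lam₂ ^ n) → v ∈ Gs ⊔ Gc) ∧
    (∀ v C, (∀ n : ℕ, ‖(A.symm ^ n) v‖ ≤ C * lam₁⁻¹ ^ n) → v ∈ Gu) ∧
    (∀ v C, (∀ n : ℕ, ‖(A.symm ^ n) v‖ ≤ C * mu₂⁻¹ ^ n) → v ∈ Gc ⊔ Gu) := by
  have hmu₂ : 0 < mu₂ := h5.trans h4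
  have hlam₂ : 0 < lam₂ := lt_trans one_pos h2
  have hlam₁ : 0 < lam₁ := hlam₂.trans h1
  have hcover : ∀ j : Fin 3, j = 0 ∨ j = 1 ∨ j = 2 := by decide
  have hcover1 : ∀ j : Fin 3, j = 1 ∨ j = 0 ∨ j = 2 := by decide
  have hcover2 : ∀ j : Fin 3, j = 2 ∨ j = 0 ∨ j = 1 := by decide
  have ind := hsplit.submodule_iSupIndep
  have d0 : Disjoint Gs (Gc ⊔ Gu) := by
    have h := ind 0
    rwa [fin3_biSup ![Gs, Gc, Gu] 0 1 2 (by decide) (by decide) hcover] at h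
  have d1 : Disjoint Gc (Gs ⊔ Gu) := by
    have h := ind 1
    rwa [fin3_biSup ![Gs, Gc, Gu] 1 0 2 (by decide) (by decide) hcover1] at h
  have d1' : Disjoint Gc (Gu ⊔ Gs) := by rwa [sup_comm Gu Gs]
  have d2 : Disjoint Gu (Gs ⊔ Gc) := by
    have h := ind 2
    rwa [fin3_biSup ![Gs, Gc, Gu] 2 0 1 (by decide) (by decide) hcover2] at h
  have htop : Gs ⊔ (Gc ⊔ Gu) = ⊤ := by
    have h := hsplit.submodule_iSup_eq_top
    rwa [fin3_iSup ![Gs, Gc, Gu]] at h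
  have cs : IsCompl Gs (Gc ⊔ Gu) := ⟨d0, codisjoint_iff.mpr htop⟩
  have cc : IsCompl Gc (Gs ⊔ Gu) :=
    ⟨d1, codisjoint_iff.mpr (by rw [sup_left_comm] at htop; exact htop)⟩
  have cu : IsCompl Gu (Gs ⊔ Gc) :=
    ⟨d2, codisjoint_iff.mpr (by
      rw [show Gu ⊔ (Gs ⊔ Gc) = Gs ⊔ (Gc ⊔ Gu) by rw [sup_comm]; rw [sup_assoc]]
      exact htop)⟩
  -- invariance of sups
  have hAsc : ∀ v ∈ Gs ⊔ Gc, A v ∈ Gs ⊔ Gc := sup_invariant A Gs Gc hAs hAc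
  have hAsu : ∀ v ∈ Gs ⊔ Gu, A v ∈ Gs ⊔ Gu := sup_invariant A Gs Gu hAs hAu
  have hAcu : ∀ v ∈ Gc ⊔ Gu, A v ∈ Gc ⊔ Gu := sup_invariant A Gc Gu hAc hAu
  -- backward invariances
  have hBs : ∀ v ∈ Gs, A.symm v ∈ Gs := symm_mem A Gs hAs
  have hBc : ∀ v ∈ Gc, A.symm v ∈ Gc := symm_mem A Gc hAc
  have hBu : ∀ v ∈ Gu, A.symm v ∈ Gu := symm_mem A Gu hAu
  have hBsc : ∀ v ∈ Gs ⊔ Gc, A.symm v ∈ Gs ⊔ Gc := sup_invariant A.symm Gs Gc hBs hBc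
  have hBsu : ∀ v ∈ Gs ⊔ Gu, A.symm v ∈ Gs ⊔ Gu := sup_invariant A.symm Gs Gu hBs hBu
  have hBcu : ∀ v ∈ Gc ⊔ Gu, A.symm v ∈ Gc ⊔ Gu := sup_invariant A.symm Gc Gu hBc hBu
  -- backward rate bounds
  have bs_low : ∀ v ∈ Gs, mu₁⁻¹ * ‖v‖ ≤ ‖A.symm v‖ := symm_lower A Gs mu₁ h5 hAs hs
  have bc_low : ∀ v ∈ Gc, lam₂⁻¹ * ‖v‖ ≤ ‖A.symm v‖ :=
    symm_lower A Gc lam₂ hlam₂ hAc (fun v hv => (hc v hv).2)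
  have hml : mu₁ < lam₁ := by linarith
  have hml2 : mu₁ < lam₂ := by linarith
  refine ⟨?_, ?_, ?_, ?_⟩
  · -- v ∈ Gs
    intro v C hv
    have m1 : v ∈ Gs ⊔ Gc :=
      comp_zero A Gu (Gs ⊔ Gc) cu hAu hAsc lam₁ mu₁ h5 hml hu v C hv
    have m2 : v ∈ Gs ⊔ Gu :=
      comp_zero A Gc (Gs ⊔ Gu) cc hAc hAsu mu₂ mu₁ h5 h4
        (fun w hw => (hc w hw).1) v C hv
    refine mid_inter Gc Gs Gu d1 ?_
    rw [mem_inf]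
    exact ⟨by rwa [sup_comm Gc Gs], m2⟩
  · -- v ∈ Gs ⊔ Gc
    intro v C hv
    exact comp_zero A Gu (Gs ⊔ Gc) cu hAu hAsc lam₁ lam₂ hlam₂ h1 hu v C hv
  · -- v ∈ Gu
    intro v C hv
    have hil : (0:ℝ) < lam₁⁻¹ := inv_pos.mpr hlam₁
    have m1 : v ∈ Gc ⊔ Gu :=
      comp_zero A.symm Gs (Gc ⊔ Gu) cs hBs hBcu mu₁⁻¹ lam₁⁻¹ hil
        (inv_strictAnti₀ h5 hml) bs_low v C hv
    have m2 : v ∈ Gs ⊔ Gu :=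
      comp_zero A.symm Gc (Gs ⊔ Gu) cc hBc hBsu lam₂⁻¹ lam₁⁻¹ hil
        (inv_strictAnti₀ hlam₂ h1) bc_low v C hv
    refine mid_inter Gc Gu Gs d1' ?_
    rw [mem_inf]
    exact ⟨m1, by rwa [sup_comm Gu Gs]⟩
  · -- v ∈ Gc ⊔ Gu
    intro v C hv
    exact comp_zero A.symm Gs (Gc ⊔ Gu) cs hBs hBcu mu₁⁻¹ mu₂⁻¹
      (inv_pos.mpr hmu₂) (inv_strictAnti₀ h5 h4) bs_low v C hv

end Char



theorem stmt_7 {V : Type*} [NormedAddCommGroup V] [NormedSpace ℝ V]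
    [FiniteDimensional ℝ V]
    (A : V ≃ₗ[ℝ] V)
    (lam₁ lam₂ mu₂ mu₁ : ℝ)
    (h1 : lam₂ < lam₁) (h2 : 1 < lam₂) (h3 : mu₂ < 1) (h4 : mu₁ < mu₂) (h5 : 0 < mu₁)
    (Es Ec Eu : Submodule ℝ V)
    (hsplit : DirectSum.IsInternal ![Es, Ec, Eu])
    (hAs : ∀ v ∈ Es, A v ∈ Es) (hAc : ∀ v ∈ Ec, A v ∈ Ec)
    (hAu : ∀ v ∈ Eu, A v ∈ Eu)
    (hu : ∀ v ∈ Eu, lam₁ * ‖v‖ ≤ ‖A v‖)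
    (hc : ∀ v ∈ Ec, mu₂ * ‖v‖ ≤ ‖A v‖ ∧ ‖A v‖ ≤ lam₂ * ‖v‖)
    (hs : ∀ v ∈ Es, ‖A v‖ ≤ mu₁ * ‖v‖)
    (Fs Fc Fu : Submodule ℝ V)
    (hsplit' : DirectSum.IsInternal ![Fs, Fc, Fu])
    (hAs' : ∀ v ∈ Fs, A v ∈ Fs) (hAc' : ∀ v ∈ Fc, A v ∈ Fc)
    (hAu' : ∀ v ∈ Fu, A v ∈ Fu)
    (hu' : ∀ v ∈ Fu, lam₁ * ‖v‖ ≤ ‖A v‖)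
    (hc' : ∀ v ∈ Fc, mu₂ * ‖v‖ ≤ ‖A v‖ ∧ ‖A v‖ ≤ lam₂ * ‖v‖)
    (hs' : ∀ v ∈ Fs, ‖A v‖ ≤ mu₁ * ‖v‖) :
    Fs = Es ∧ Fc = Ec ∧ Fu = Eu := by
  have hmu₂ : 0 < mu₂ := h5.trans h4
  have hlam₂ : (0:ℝ) < lam₂ := lt_trans one_pos h2
  have hlam₁ : 0 < lam₁ := hlam₂.trans h1
  obtain ⟨eS, eSC, eU, eCU⟩ :=
    splitting_char A lam₁ lam₂ mu₂ mu₁ h1 h2 h3 h4 h5 Es Ec Eu hsplit hAs hAc hAu hu hc hs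
  obtain ⟨fS, fSC, fU, fCU⟩ :=
    splitting_char A lam₁ lam₂ mu₂ mu₁ h1 h2 h3 h4 h5 Fs Fc Fu hsplit' hAs' hAc' hAu' hu' hc' hs'
  have dE0 : Disjoint Es (Ec ⊔ Eu) := by
    have h := hsplit.submodule_iSupIndep 0
    rwa [fin3_biSup ![Es, Ec, Eu] 0 1 2 (by decide) (by decide) (by decide)] at h
  have dF0 : Disjoint Fs (Fc ⊔ Fu) := by
    have h := hsplit'.submodule_iSupIndep 0
    rwa [fin3_biSup ![Fs, Fc, Fu] 0 1 2 (by decide) (by decide) (by decide)] at h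
  have FsEs : Fs ≤ Es := fun v hv =>
    eS v ‖v‖ (iter_upper A Fs mu₁ h5.le hAs' hs' v hv)
  have EsFs : Es ≤ Fs := fun v hv =>
    fS v ‖v‖ (iter_upper A Es mu₁ h5.le hAs hs v hv)
  have FuEu : Fu ≤ Eu := fun v hv =>
    eU v ‖v‖ (iter_upper A.symm Fu lam₁⁻¹ (inv_pos.mpr hlam₁).le
      (symm_mem A Fu hAu') (symm_upper A Fu lam₁ hlam₁ hAu' hu') v hv)
  have EuFu : Eu ≤ Fu := fun v hv =>
    fU v ‖v‖ (iter_upper A.symm Eu lam₁⁻¹ (inv_pos.mpr hlam₁).le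
      (symm_mem A Eu hAu) (symm_upper A Eu lam₁ hlam₁ hAu hu) v hv)
  have FcEc : Fc ≤ Ec := by
    intro v hv
    have m1 : v ∈ Es ⊔ Ec :=
      eSC v ‖v‖ (iter_upper A Fc lam₂ hlam₂.le hAc' (fun w hw => (hc' w hw).2) v hv)
    have m2 : v ∈ Ec ⊔ Eu :=
      eCU v ‖v‖ (iter_upper A.symm Fc mu₂⁻¹ (inv_pos.mpr hmu₂).le
        (symm_mem A Fc hAc') (symm_upper A Fc mu₂ hmu₂ hAc' (fun w hw => (hc' w hw).1)) v hv)
    exact mid_inter Es Ec Eu dE0 (mem_inf.mpr ⟨m1, m2⟩)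
  have EcFc : Ec ≤ Fc := by
    intro v hv
    have m1 : v ∈ Fs ⊔ Fc :=
      fSC v ‖v‖ (iter_upper A Ec lam₂ hlam₂.le hAc (fun w hw => (hc w hw).2) v hv)
    have m2 : v ∈ Fc ⊔ Fu :=
      fCU v ‖v‖ (iter_upper A.symm Ec mu₂⁻¹ (inv_pos.mpr hmu₂).le
        (symm_mem A Ec hAc) (symm_upper A Ec mu₂ hmu₂ hAc (fun w hw => (hc w hw).1)) v hv)
    exact mid_inter Fs Fc Fu dF0 (mem_inf.mpr ⟨m1, m2⟩)
  exact ⟨le_antisymm FsEs EsFs, le_antisymm FcEc EcFc, le_antisymm FuEu EuFu⟩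
end
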